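/- (Geometric alternative along the bottleneck path.) Let Λ = [1,L]^d, let η ∈ A_* and z ∈ Λ ∖ {v^*} satisfy c_z^{Λ,max}(η) = 1 and η^z ∉ A_*, and let z = u_0 ≪ u_1 ≪ … ≪ u_M = v^* (M ≥ 1) be points of Λ such that, with d_i = ‖u_{i−1} − u_i‖₁: 1 = d_1 < … < d_M < L and for each 1 ≤ i ≤ M one has Φ_ℓ(η)_{u_i} = Φ_ℓ(η^z)_{u_i} = 0 for ℓ < d_i, Φ_{d_i}(η)_{u_i} ≠ Φ_{d_i}(η^z)_{u_i}, and Φ_{d_i−1}(η)_{u_{i−1}} ≠ Φ_{d_i−1}(η^z)_{u_{i−1}}. Let B = ∏_{j=1}^d [a_j,b_j] be a box with: B ⊂ Λ ∪ ∂_E Λ; z ∈ B; z ≠ a := (a_1,…,a_d) and η_a = 0 (η extended by 0 on ∂_E Λ); and b := (b_1,…,b_d) = u_k for some 0 ≤ k ≤ M. Set ℓ = Σ_j (b_j − a_j), B⁻ = { x ∈ (Λ ∪ ∂_E Λ) ∖ B : x ≪ a and ‖x−a‖₁ < ℓ }, and B⁺ = { x ∈ (Λ ∪ ∂_E Λ)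 ∖ B : b ≪ x and ‖x−b‖₁ ≤ ℓ }. Then at least one of the following holds: (1) v^* ∈ B and B ∩ ∂_E Λ ≠ ∅; (2) a ∉ ∂_E Λ, B⁻ ≠ ∅ and η has a zero in B⁻; (3) k ≠ M and u_{k+1} ∈ B⁺. -/

import Mathlib

open scoped BigOperators

namespace East

/-- Sites of the lattice `ℤ^d`. -/
abbrev Site (d : ℕ) := Fin d → ℤ

/-- The canonical basis vector `e_i` of `ℤ^d`. -/
def basis (d : ℕ) (i : Fin d) : Site d := fun j => if j = i then 1 else 0

/-- Spin configurations on a finite box `Λ ⊂ ℤ^d`: `true` = particle, `false` = vacancy. -/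
abbrev Cfg (d : ℕ) (Λ : Finset (Site d)) := {x // x ∈ Λ} → Bool

/-- The weight of a configuration under the product Bernoulli(`1-q`) measure `π_Λ`. -/
noncomputable def weight (d : ℕ) (q : ℝ) {Λ : Finset (Site d)} (η : Cfg d Λ) : ℝ :=
  ∏ x : {x // x ∈ Λ}, (if η x then 1 - q else q)

/-- Expectation with respect to `π_Λ`. -/
noncomputable def mean (d : ℕ) (q : ℝ) {Λ : Finset (Site d)} (f : Cfg d Λ → ℝ) : ℝ :=
  ∑ η : Cfg d Λ, weight d q η * f η

/-- Conditional expectation of `f` with respect to the spins in `V`,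
given the spins outside `V`. -/
noncomputable def condEx (d : ℕ) (q : ℝ) (V : Finset (Site d)) {Λ : Finset (Site d)}
    (f : Cfg d Λ → ℝ) (η : Cfg d Λ) : ℝ :=
  ∑ ξ : Cfg d Λ, weight d q ξ * f (fun x => if (x : Site d) ∈ V then ξ x else η x)

/-- Conditional variance `Var_V(f)` of `f` with respect to the spins in `V`,
given the spins outside `V`. -/
noncomputable def condVar (d : ℕ) (q : ℝ) (V : Finset (Site d)) {Λ : Finset (Site d)}
    (f : Cfg d Λ → ℝ) (η : Cfg d Λ) : ℝ :=
  condEx d q V (fun ζ => f ζ ^ 2) η - (condEx d q V f η) ^ 2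

/-- The (total) variance of `f` under `π_Λ`. -/
noncomputable def variance (d : ℕ) (q : ℝ) {Λ : Finset (Site d)} (f : Cfg d Λ → ℝ) : ℝ :=
  mean d q (fun η => f η ^ 2) - (mean d q f) ^ 2

/-- The configuration on all of `ℤ^d` agreeing with `η` on `Λ` and with the boundary
condition `σ` outside of `Λ`. -/
def full (d : ℕ) {Λ : Finset (Site d)} (σ : Site d → Bool) (η : Cfg d Λ) (y : Site d) : Bool :=
  if h : y ∈ Λ then η ⟨y, h⟩ else σ y

open Classical in
/-- The East-like constraint indicator `c_x^{Λ,σ}(η)`: it equals `1` iff the configuration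
agreeing with `η` on `Λ` and with `σ` outside has a vacancy at `x - e_i` for some `i`. -/
noncomputable def cInd (d : ℕ) {Λ : Finset (Site d)} (σ : Site d → Bool) (x : Site d)
    (η : Cfg d Λ) : ℝ :=
  if ∃ i : Fin d, full d σ η (x - basis d i) = false then 1 else 0

/-- The Dirichlet form `D_Λ^σ(f) = Σ_{x∈Λ} π_Λ(c_x^{Λ,σ} · Var_x f)` of the East-like
process on `Λ` with boundary condition `σ`. -/
noncomputable def dirichlet (d : ℕ) (q : ℝ) (Λ : Finset (Site d)) (σ : Site d → Bool)
    (f : Cfg d Λ → ℝ) : ℝ :=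
  ∑ x ∈ Λ, mean d q (fun η => cInd d σ x η * condVar d q {x} f η)

/-- The spectral gap of the East-like process on `Λ` with boundary condition `σ`. -/
noncomputable def gap (d : ℕ) (q : ℝ) (Λ : Finset (Site d)) (σ : Site d → Bool) : ℝ :=
  sInf { r : ℝ | ∃ f : Cfg d Λ → ℝ, (∃ η η' : Cfg d Λ, f η ≠ f η') ∧
    r = dirichlet d q Λ σ f / variance d q f }

/-- The relaxation time `T_rel^σ(Λ;q)`, the inverse of the spectral gap. -/
noncomputable def Trel (d : ℕ) (q : ℝ) (Λ : Finset (Site d)) (σ : Site d → Bool) : ℝ :=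
  (gap d q Λ σ)⁻¹

/-- The cube `[1,L]^d`. -/
noncomputable def cube (d : ℕ) (L : ℕ) : Finset (Site d) := Finset.Icc (fun _ => 1) (fun _ => (L : ℤ))

/-- The maximal boundary condition: all boundary spins are vacancies. -/
def maxBC (d : ℕ) : Site d → Bool := fun _ => false

/-- The site `(0,1,…,1) = (1,…,1) - e_1`, carrying the vacancy of the (canonical)
minimal boundary condition for the cube `[1,L]^d`. -/
def minVac (d : ℕ) : Site d := fun j => if (j : ℕ) = 0 then 0 else 1

/-- The minimal boundary condition for the cube `[1,L]^d`: a unique vacancy at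
`(1,…,1) - e_1`. -/
def minBC (d : ℕ) : Site d → Bool := fun x => decide (x ≠ minVac d)

/-- `T_rel^max(L;q)`, relaxation time on `[1,L]^d` with maximal boundary conditions. -/
noncomputable def TrelMax (d : ℕ) (q : ℝ) (L : ℕ) : ℝ := Trel d q (cube d L) (maxBC d)

/-- `T_rel^min(L;q)`, relaxation time on `[1,L]^d` with minimal boundary conditions. -/
noncomputable def TrelMin (d : ℕ) (q : ℝ) (L : ℕ) : ℝ := Trel d q (cube d L) (minBC d)

/-- `θ_q = log₂(1/q)`. -/
noncomputable def theta (q : ℝ) : ℝ := Real.logb 2 (1 / q)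

/-- The East boundary `∂_E Λ` of a finite set `Λ ⊂ ℤ^d`. -/
def eastBoundary (d : ℕ) (Λ : Finset (Site d)) : Set (Site d) :=
  {x | x ∉ Λ ∧ ∃ i : Fin d, x + basis d i ∈ Λ}

end East

namespace East

/-- The gap `g_x(η)` of a site `x` in the configuration `η ∈ Ω_{[1,L]^d}` extended by
zeros on `∂_E Λ`: the least `g > 0` such that some `z ∈ Λ ∪ ∂_E Λ` with `z ≪ x`,
`‖x - z‖₁ = g` carries a vacancy. -/
noncomputable def gapOf (d L : ℕ) (η : Cfg d (cube d L)) (x : Site d) : ℕ :=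
  sInf { g : ℕ | 0 < g ∧ ∃ z : Site d,
    (z ∈ cube d L ∨ z ∈ eastBoundary d (cube d L)) ∧ z ≤ x ∧
    full d (maxBC d) η z = false ∧ (∑ i, (x i - z i).natAbs) = g }

/-- One stage of the deterministic dynamics: remove all vacancies with gap `g`. -/
noncomputable def phiStep (d L : ℕ) (g : ℕ) (η : Cfg d (cube d L)) : Cfg d (cube d L) :=
  fun y => if gapOf d L η (y : Site d) = g then true else η y

/-- The deterministic dynamics `Φ_g`. -/
noncomputable def Phi (d L : ℕ) : ℕ → Cfg d (cube d L) → Cfg d (cube d L)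
  | 0, η => η
  | g + 1, η => phiStep d L (g + 1) (Phi d L g η)

/-- The upper corner `v^* = (L,…,L)` of `[1,L]^d`. -/
def vstar (d L : ℕ) : Site d := fun _ => (L : ℤ)

/-- The configuration `𝟙0` with a unique vacancy, at `v^*`. -/
def oneZero (d L : ℕ) : Cfg d (cube d L) :=
  fun y => decide ((y : Site d) ≠ vstar d L)

/-- The bottleneck set `A_* = { η : Φ_{L-1}(η) = 𝟙0 }`. -/
noncomputable def Astar (d L : ℕ) : Set (Cfg d (cube d L)) :=
  { η | Phi d L (L - 1) η = oneZero d L }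

/-- The configuration `η` with the spin at `z` flipped. -/
def flipAt (d : ℕ) {Λ : Finset (Site d)} (η : Cfg d Λ) (z : Site d) : Cfg d Λ :=
  fun y => if (y : Site d) = z then !(η y) else η y

end East

namespace East

section GapHelpers

variable {d L : ℕ}

/-- The candidate-gap set used in `gapOf`. -/
def gSet (d L : ℕ) (η : Cfg d (cube d L)) (x : Site d) : Set ℕ :=
  { g : ℕ | 0 < g ∧ ∃ z : Site d,
    (z ∈ cube d L ∨ z ∈ eastBoundary d (cube d L)) ∧ z ≤ x ∧
    full d (maxBC d) η z = false ∧ (∑ i, (x i - z i).natAbs) = g }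

lemma gapOf_eq (η : Cfg d (cube d L)) (x : Site d) :
    gapOf d L η x = sInf (gSet d L η x) := rfl

lemma mem_cube {y : Site d} : y ∈ cube d L ↔ ∀ i, 1 ≤ y i ∧ y i ≤ (L : ℤ) := by
  simp [cube, Finset.mem_Icc, Pi.le_def, forall_and]

lemma full_not_mem {ζ : Cfg d (cube d L)} {y : Site d} (h : y ∉ cube d L) :
    full d (maxBC d) ζ y = false := by
  simp [full, h, maxBC]

lemma full_mem {ζ : Cfg d (cube d L)} {y : Site d} (h : y ∈ cube d L) :
    full d (maxBC d) ζ y = ζ ⟨y, h⟩ := dif_pos h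

lemma update_mem_boundary (hL : 1 ≤ L) {y : Site d} (hy : y ∈ cube d L) (i : Fin d) :
    Function.update y i 0 ∈ eastBoundary d (cube d L) := by
  have hy' := mem_cube.1 hy
  constructor
  · intro hmem
    have := (mem_cube.1 hmem) i
    simp [Function.update_self] at this
  · refine ⟨i, ?_⟩
    rw [mem_cube]
    intro j
    by_cases hj : j = i
    · subst hj
      simp [basis, Function.update_self]
      exact_mod_cast hL
    · simp [basis, hj, Function.update_of_ne hj]
      exact hy' j

lemma gSet_nonempty (hd : 1 ≤ d) (hL : 1 ≤ L) (ζ : Cfg d (cube d L)) {y : Site d}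
    (hy : y ∈ cube d L) : (gSet d L ζ y).Nonempty := by
  have hy' := mem_cube.1 hy
  set i : Fin d := ⟨0, hd⟩
  refine ⟨(y i).natAbs, ?_, Function.update y i 0, Or.inr (update_mem_boundary hL hy i), ?_, ?_, ?_⟩
  · have := (hy' i).1; omega
  · intro j
    rcases eq_or_ne j i with hj | hj
    · rw [hj, Function.update_self]; linarith [(hy' i).1]
    · rw [Function.update_of_ne hj]
  · exact full_not_mem (fun hmem => by have := (mem_cube.1 hmem) i; simp [Function.update_self] at this)
  · rw [Fintype.sum_eq_single i]
    · simp [Function.update_self]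
    · intro j hj; simp [Function.update_of_ne hj]

lemma gapOf_mem (hd : 1 ≤ d) (hL : 1 ≤ L) {ζ : Cfg d (cube d L)} {y : Site d}
    (hy : y ∈ cube d L) : gapOf d L ζ y ∈ gSet d L ζ y := by
  rw [gapOf_eq]; exact Nat.sInf_mem (gSet_nonempty hd hL ζ hy)

lemma gapOf_le {ζ : Cfg d (cube d L)} {y : Site d} {g : ℕ} (hg : g ∈ gSet d L ζ y) :
    gapOf d L ζ y ≤ g := Nat.sInf_le hg

end GapHelpers
section PhiHelpers

variable {d L : ℕ}

lemma phi_step_false {s : ℕ} {ξ : Cfg d (cube d L)} {y : Site d} (hy : y ∈ cube d L) :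
    full d (maxBC d) (Phi d L (s + 1) ξ) y = false ↔
      gapOf d L (Phi d L s ξ) y ≠ s + 1 ∧ full d (maxBC d) (Phi d L s ξ) y = false := by
  rw [full_mem hy, full_mem hy]
  show (phiStep d L (s + 1) (Phi d L s ξ)) ⟨y, hy⟩ = false ↔ _
  unfold phiStep
  by_cases h : gapOf d L (Phi d L s ξ) y = s + 1 <;> simp [h]

lemma full_phi_succ_mono {s : ℕ} {ξ : Cfg d (cube d L)} {y : Site d}
    (h : full d (maxBC d) (Phi d L (s + 1) ξ) y = false) :
    full d (maxBC d) (Phi d L s ξ) y = false := by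
  by_cases hy : y ∈ cube d L
  · exact ((phi_step_false hy).1 h).2
  · exact full_not_mem hy

lemma full_phi_mono {s t : ℕ} (hst : s ≤ t) {ξ : Cfg d (cube d L)} {y : Site d}
    (h : full d (maxBC d) (Phi d L t ξ) y = false) :
    full d (maxBC d) (Phi d L s ξ) y = false := by
  induction t with
  | zero => exact (Nat.le_zero.1 hst) ▸ h
  | succ t ih =>
    rcases Nat.lt_or_ge s (t + 1) with hlt | hge
    · exact ih (by omega) (full_phi_succ_mono h)
    · have : s = t + 1 := by omega
      exact this ▸ h

lemma full_phi_zero {ξ : Cfg d (cube d L)} {y : Site d}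
    (h : full d (maxBC d) (Phi d L 0 ξ) y = false) : full d (maxBC d) ξ y = false := h

lemma gapOf_anti (hd : 1 ≤ d) (hL : 1 ≤ L) {ζ ζ' : Cfg d (cube d L)}
    (hsub : ∀ x : Site d, full d (maxBC d) ζ' x = false → full d (maxBC d) ζ x = false)
    {y : Site d} (hy : y ∈ cube d L) : gapOf d L ζ y ≤ gapOf d L ζ' y := by
  obtain ⟨hpos, x, hx1, hx2, hx3, hx4⟩ := gapOf_mem hd hL (ζ := ζ') hy
  exact gapOf_le ⟨hpos, x, hx1, hx2, hsub x hx3, hx4⟩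

lemma gap_invariant (hd : 1 ≤ d) (hL : 1 ≤ L) (ξ : Cfg d (cube d L)) :
    ∀ (s : ℕ) {y : Site d}, y ∈ cube d L → full d (maxBC d) (Phi d L s ξ) y = false →
      s < gapOf d L (Phi d L s ξ) y := by
  intro s
  induction s with
  | zero => intro y hy _; exact (gapOf_mem hd hL hy).1
  | succ s ih =>
    intro y hy h
    obtain ⟨hne, hfalse⟩ := (phi_step_false hy).1 h
    have h1 := ih hy hfalse
    have h2 : gapOf d L (Phi d L s ξ) y ≤ gapOf d L (Phi d L (s + 1) ξ) y :=
      gapOf_anti hd hL (fun x hx => full_phi_succ_mono hx) hy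
    omega

/-- Core contradiction: a vacancy at `y` surviving to stage `l` while a vacancy sits
at `aB ≪ y` at distance `l` at stage `l - 1`. -/
lemma core_contra (hd : 1 ≤ d) (hL : 1 ≤ L) {ξ : Cfg d (cube d L)} {y aB : Site d} {l : ℕ}
    (hl : 1 ≤ l) (hy : y ∈ cube d L)
    (haB : aB ∈ cube d L ∨ aB ∈ eastBoundary d (cube d L)) (hab : aB ≤ y)
    (hdist : (∑ j, (y j - aB j).natAbs) = l)
    (haf : full d (maxBC d) (Phi d L (l - 1) ξ) aB = false)
    (hyf : full d (maxBC d) (Phi d L l ξ) y = false) : False := by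
  obtain ⟨s, rfl⟩ : ∃ s, l = s + 1 := ⟨l - 1, by omega⟩
  obtain ⟨hne, hfalse⟩ := (phi_step_false hy).1 hyf
  have hinv := gap_invariant hd hL ξ s hy hfalse
  have haf' : full d (maxBC d) (Phi d L s ξ) aB = false := by simpa using haf
  have hle : gapOf d L (Phi d L s ξ) y ≤ s + 1 :=
    gapOf_le ⟨by omega, aB, haB, hab, haf', hdist⟩
  omega

/-- Persistence of the vacancy at `aB` up to stage `l - 1`, given that all candidate
gaps at `aB` stay `≥ l`. -/
lemma persist_vac (hd : 1 ≤ d) (hL : 1 ≤ L) {ξ : Cfg d (cube d L)} {aB : Site d} {l : ℕ}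
    (hy : aB ∈ cube d L)
    (hgap : ∀ s : ℕ, ∀ g ∈ gSet d L (Phi d L s ξ) aB, l ≤ g)
    (h0 : full d (maxBC d) ξ aB = false) :
    ∀ s, s < l → full d (maxBC d) (Phi d L s ξ) aB = false := by
  intro s
  induction s with
  | zero => intro _; exact h0
  | succ s ih =>
    intro hs
    rw [phi_step_false hy]
    refine ⟨?_, ih (by omega)⟩
    intro heq
    have hmem := gapOf_mem hd hL (ζ := Phi d L s ξ) hy
    have := hgap s _ hmem
    omega

lemma full_flip_ne {z x : Site d} {η : Cfg d (cube d L)} (hxz : x ≠ z) :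
    full d (maxBC d) (flipAt d η z) x = full d (maxBC d) η x := by
  by_cases hx : x ∈ cube d L
  · rw [full_mem hx, full_mem hx]
    simp [flipAt, hxz]
  · rw [full_not_mem hx, full_not_mem hx]

end PhiHelpers
/-- The third alternative, given persistence of the vacancy at `aB`. -/
lemma third_aux (d L : ℕ) (hd : 1 ≤ d) (hL : 1 ≤ L) (η : Cfg d (cube d L)) (z : Site d)
    (M : ℕ) (u : ℕ → Site d)
    (humem : ∀ i ≤ M, u i ∈ cube d L) (humono : ∀ i < M, u i ≤ u (i + 1))
    (hprop : ∀ i, 1 ≤ i → i ≤ M →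
      (∀ l < ∑ j, (u i j - u (i - 1) j).natAbs,
        full d (maxBC d) (Phi d L l η) (u i) = false ∧
        full d (maxBC d) (Phi d L l (flipAt d η z)) (u i) = false) ∧
      full d (maxBC d) (Phi d L (∑ j, (u i j - u (i - 1) j).natAbs) η) (u i) ≠
        full d (maxBC d)
          (Phi d L (∑ j, (u i j - u (i - 1) j).natAbs) (flipAt d η z)) (u i) ∧
      full d (maxBC d)
          (Phi d L ((∑ j, (u i j - u (i - 1) j).natAbs) - 1) η) (u (i - 1)) ≠
        full d (maxBC d)
          (Phi d L ((∑ j, (u i j - u (i - 1) j).natAbs) - 1) (flipAt d η z)) (u (i - 1)))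
    (aB bB : Site d) (k : ℕ) (hkM : k < M) (hbB : bB = u k)
    (l : ℕ) (hl : l = ∑ j, (bB j - aB j).natAbs) (hl1 : 1 ≤ l)
    (habB : aB ≤ bB)
    (haBmem : aB ∈ cube d L ∨ aB ∈ eastBoundary d (cube d L))
    (hD1k : 1 ≤ ∑ j, (u (k + 1) j - u k j).natAbs)
    (hpers : ∀ s, s < l → full d (maxBC d) (Phi d L s η) aB = false ∧
      full d (maxBC d) (Phi d L s (flipAt d η z)) aB = false) :
    u (k + 1) ∉ Finset.Icc aB bB ∧ bB ≤ u (k + 1) ∧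
      (∑ j, (u (k + 1) j - bB j).natAbs) ≤ l := by
  have hmono := humono k hkM
  have hble : bB ≤ u (k + 1) := by rw [hbB]; exact hmono
  have haub : aB ≤ u k := by rw [← hbB]; exact habB
  have hnotIcc : u (k + 1) ∉ Finset.Icc aB bB := by
    intro hmem
    have h1 := (Finset.mem_Icc.1 hmem).2
    rw [hbB] at h1
    have heq : u (k + 1) = u k := le_antisymm h1 hmono
    rw [heq] at hD1k
    simp at hD1k
  refine ⟨hnotIcc, hble, ?_⟩
  by_contra hgt
  push_neg at hgt
  obtain ⟨-, -, hdiff'⟩ := hprop (k + 1) (by omega) (by omega)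
  simp only [Nat.add_sub_cancel] at hdiff'
  rw [hbB] at hgt
  have hcases :
      full d (maxBC d) (Phi d L ((∑ j, (u (k + 1) j - u k j).natAbs) - 1) η) (u k) = false ∨
      full d (maxBC d)
        (Phi d L ((∑ j, (u (k + 1) j - u k j).natAbs) - 1) (flipAt d η z)) (u k) = false := by
    cases hb : full d (maxBC d)
        (Phi d L ((∑ j, (u (k + 1) j - u k j).natAbs) - 1) η) (u k) with
    | false => exact Or.inl rfl
    | true =>
      cases hb' : full d (maxBC d)
          (Phi d L ((∑ j, (u (k + 1) j - u k j).natAbs) - 1) (flipAt d η z)) (u k) with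
      | false => exact Or.inr rfl
      | true => exact absurd (hb.trans hb'.symm) hdiff'
  have hlle : l ≤ (∑ j, (u (k + 1) j - u k j).natAbs) - 1 := by omega
  rcases hcases with hf | hf
  · exact core_contra hd hL hl1 (humem k (by omega)) haBmem haub (by rw [hl, hbB])
      (hpers (l - 1) (by omega)).1 (full_phi_mono hlle hf)
  · exact core_contra hd hL hl1 (humem k (by omega)) haBmem haub (by rw [hl, hbB])
      (hpers (l - 1) (by omega)).2 (full_phi_mono hlle hf)
/-- **geometric alternative along the bottleneck path.** Under the setup
of the structural lemma (η ∈ A_*, flip at `z` leaves `A_*`, and a chain `u_0,…,u_M` as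
provided there), for every box `B = ∏[a_j,b_j]` with `B ⊂ Λ ∪ ∂_E Λ`, `z ∈ B`, `z ≠ a`,
`η_a = 0` (η extended by zeros) and `b = u_k` for some `0 ≤ k ≤ M`, at least one of the
following holds, where `ℓ = ‖B‖₁`:
(1) `v^* ∈ B` and `B ∩ ∂_E Λ ≠ ∅`;
(2) `a ∉ ∂_E Λ` and `η` has a vacancy in `B⁻ = {x ∈ Λ̄ ∖ B : x ≪ a, ‖x-a‖₁ < ℓ}`;
(3) `k ≠ M` and `u_{k+1} ∈ B⁺ = {x ∈ Λ̄ ∖ B : b ≪ x, ‖x-b‖₁ ≤ ℓ}`. -/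
theorem east_bottleneck_alternative (d L : ℕ) (hd : 1 ≤ d) (hL : 1 ≤ L)
    (η : Cfg d (cube d L)) (hη : η ∈ Astar d L)
    (z : Site d) (hz : z ∈ cube d L) (hzv : z ≠ vstar d L)
    (hc : cInd d (maxBC d) z η = 1) (hflip : flipAt d η z ∉ Astar d L)
    (M : ℕ) (u : ℕ → Site d) (hM : 1 ≤ M) (hu0 : u 0 = z) (huM : u M = vstar d L)
    (humem : ∀ i ≤ M, u i ∈ cube d L) (humono : ∀ i < M, u i ≤ u (i + 1))
    (hd1 : (∑ j, (u 1 j - u 0 j).natAbs) = 1)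
    (hdinc : ∀ i, 1 ≤ i → i < M →
      (∑ j, (u i j - u (i - 1) j).natAbs) < ∑ j, (u (i + 1) j - u i j).natAbs)
    (hdM : (∑ j, (u M j - u (M - 1) j).natAbs) < L)
    (hprop : ∀ i, 1 ≤ i → i ≤ M →
      (∀ l < ∑ j, (u i j - u (i - 1) j).natAbs,
        full d (maxBC d) (Phi d L l η) (u i) = false ∧
        full d (maxBC d) (Phi d L l (flipAt d η z)) (u i) = false) ∧
      full d (maxBC d) (Phi d L (∑ j, (u i j - u (i - 1) j).natAbs) η) (u i) ≠
        full d (maxBC d)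
          (Phi d L (∑ j, (u i j - u (i - 1) j).natAbs) (flipAt d η z)) (u i) ∧
      full d (maxBC d)
          (Phi d L ((∑ j, (u i j - u (i - 1) j).natAbs) - 1) η) (u (i - 1)) ≠
        full d (maxBC d)
          (Phi d L ((∑ j, (u i j - u (i - 1) j).natAbs) - 1) (flipAt d η z)) (u (i - 1)))
    (aB bB : Site d)
    (hBsub : (Finset.Icc aB bB : Set (Site d)) ⊆
      ↑(cube d L) ∪ eastBoundary d (cube d L))
    (hzB : z ∈ Finset.Icc aB bB) (hza : z ≠ aB)
    (ha0 : full d (maxBC d) η aB = false)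
    (k : ℕ) (hk : k ≤ M) (hbB : bB = u k) :
    (vstar d L ∈ Finset.Icc aB bB ∧
      ∃ x ∈ Finset.Icc aB bB, x ∈ eastBoundary d (cube d L)) ∨
    (aB ∉ eastBoundary d (cube d L) ∧
      ∃ x : Site d, (x ∈ cube d L ∨ x ∈ eastBoundary d (cube d L)) ∧
        x ∉ Finset.Icc aB bB ∧ x ≤ aB ∧
        (∑ j, (aB j - x j).natAbs) < (∑ j, (bB j - aB j).natAbs) ∧
        full d (maxBC d) η x = false) ∨
    (k ≠ M ∧ (u (k + 1) ∈ cube d L ∨ u (k + 1) ∈ eastBoundary d (cube d L)) ∧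
      u (k + 1) ∉ Finset.Icc aB bB ∧ bB ≤ u (k + 1) ∧
      (∑ j, (u (k + 1) j - bB j).natAbs) ≤ (∑ j, (bB j - aB j).natAbs)) := by  classical
  have hη' : Phi d L (L - 1) η = oneZero d L := hη
  obtain ⟨hazB, hzbB⟩ := Finset.mem_Icc.1 hzB
  have habB : aB ≤ bB := le_trans hazB hzbB
  set l : ℕ := ∑ j, (bB j - aB j).natAbs with hl
  have hl1 : 1 ≤ l := by
    rcases Nat.eq_zero_or_pos l with h0 | h
    swap
    · exact h
    exfalso
    have hsum : (∑ j, (bB j - aB j).natAbs) = 0 := by rw [← hl]; exact h0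
    have hz0 := Finset.sum_eq_zero_iff.1 hsum
    apply hza
    funext j
    have h1 := Pi.le_def.1 hazB j
    have h2 := Pi.le_def.1 hzbB j
    have h3 := hz0 j (Finset.mem_univ j)
    omega
  have haBI : aB ∈ Finset.Icc aB bB := Finset.mem_Icc.2 ⟨le_refl aB, habB⟩
  have haBmem : aB ∈ cube d L ∨ aB ∈ eastBoundary d (cube d L) := by
    have := hBsub (Finset.mem_coe.2 haBI)
    simpa using this
  have hD1 : ∀ i, 1 ≤ i → i ≤ M → 1 ≤ ∑ j, (u i j - u (i - 1) j).natAbs := by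
    intro i
    induction i with
    | zero => omega
    | succ i ih =>
      intro _ hiM
      rcases Nat.eq_zero_or_pos i with h0 | hpos
      · subst h0
        have he : (1 : ℕ) - 1 = 0 := rfl
        rw [he, hd1]
      · have h2 := hdinc i hpos (by omega)
        have h3 := ih hpos (by omega)
        simp only [Nat.add_sub_cancel]
        omega
  have hD1k : k < M → 1 ≤ ∑ j, (u (k + 1) j - u k j).natAbs := by
    intro hkM
    have := hD1 (k + 1) (by omega) (by omega)
    simpa only [Nat.add_sub_cancel] using this
  by_cases haB : aB ∈ cube d L
  · -- `aB` lies inside the cube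
    by_cases hP : ∃ x : Site d, (x ∈ cube d L ∨ x ∈ eastBoundary d (cube d L)) ∧
        x ∉ Finset.Icc aB bB ∧ x ≤ aB ∧ (∑ j, (aB j - x j).natAbs) < l ∧
        full d (maxBC d) η x = false
    · exact Or.inr (Or.inl ⟨fun hbd => hbd.1 haB, hP⟩)
    · -- no nearby vacancy below `aB`: the vacancy at `aB` persists
      have hgapξ : ∀ ξ : Cfg d (cube d L),
          (∀ x : Site d, x ≤ aB → full d (maxBC d) ξ x = false →
            full d (maxBC d) η x = false) →
          ∀ s : ℕ, ∀ g ∈ gSet d L (Phi d L s ξ) aB, l ≤ g := by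
        intro ξ hξ s g hg
        obtain ⟨hg0, x, hx1, hx2, hx3, hx4⟩ := hg
        by_contra hlt
        push_neg at hlt
        apply hP
        refine ⟨x, hx1, ?_, hx2, by rw [hx4]; exact hlt,
          hξ x hx2 (full_phi_mono (Nat.zero_le s) hx3)⟩
        intro hxI
        have h1 := (Finset.mem_Icc.1 hxI).1
        have hxeq : x = aB := le_antisymm hx2 h1
        rw [hxeq] at hx4
        simp at hx4
        omega
      have hpers : ∀ s, s < l → full d (maxBC d) (Phi d L s η) aB = false ∧
          full d (maxBC d) (Phi d L s (flipAt d η z)) aB = false := by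
        intro s hs
        constructor
        · exact persist_vac hd hL haB (hgapξ η (fun x _ h => h)) ha0 s hs
        · refine persist_vac hd hL haB (hgapξ (flipAt d η z) ?_) ?_ s hs
          · intro x hx hfx
            have hxz : x ≠ z := by
              intro h
              subst h
              exact hza (le_antisymm hx hazB)
            rwa [full_flip_ne hxz] at hfx
          · rw [full_flip_ne (Ne.symm hza)]
            exact ha0
      by_cases hkM : k = M
      · -- `bB = v^*`, derive a contradiction
        exfalso
        subst hkM
        have hbv : bB = vstar d L := by rw [hbB, huM]
        have hAj : ∀ j : Fin d, (l : ℤ) ≤ aB j := by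
          intro j
          by_contra hlt
          push_neg at hlt
          apply hP
          refine ⟨Function.update aB j 0, Or.inr (update_mem_boundary hL haB j),
            ?_, ?_, ?_, full_not_mem ?_⟩
          · intro hxI
            have h1 := Pi.le_def.1 (Finset.mem_Icc.1 hxI).1 j
            rw [Function.update_self] at h1
            have := (mem_cube.1 haB j).1
            omega
          · intro j'
            rcases eq_or_ne j' j with h | h
            · rw [h, Function.update_self]
              linarith [(mem_cube.1 haB j).1]
            · rw [Function.update_of_ne h]
          · rw [Fintype.sum_eq_single j]
            · rw [Function.update_self]
              have h1 := (mem_cube.1 haB j).1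
              omega
            · intro j' hj'
              rw [Function.update_of_ne hj']
              simp
          · intro hmem
            have := (mem_cube.1 hmem j).1
            rw [Function.update_self] at this
            omega
        have hlL : l < L := by
          by_contra hLl
          push_neg at hLl
          have haL : ∀ j, aB j = (L : ℤ) := by
            intro j
            have h1 := (mem_cube.1 haB j).2
            have h2 := hAj j
            omega
          have hzero : l = 0 := by
            rw [hl, hbv]
            apply Finset.sum_eq_zero
            intro j _
            rw [haL j]
            simp [vstar]
          omega
        have hvcube : vstar d L ∈ cube d L := by
          rw [mem_cube]
          intro i
          constructor
          · simp [vstar]; exact_mod_cast hL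
          · simp [vstar]
        have hvfalse : full d (maxBC d) (Phi d L (L - 1) η) (vstar d L) = false := by
          rw [hη', full_mem hvcube]
          simp [oneZero]
        have hvl : full d (maxBC d) (Phi d L l η) (vstar d L) = false :=
          full_phi_mono (by omega) hvfalse
        have haub : aB ≤ vstar d L := by rw [← hbv]; exact habB
        exact core_contra hd hL hl1 hvcube haBmem haub (by rw [hl, hbv])
          (hpers (l - 1) (by omega)).1 hvl
      · -- `k < M`: third alternative
        have hkM' : k < M := lt_of_le_of_ne hk hkM
        obtain ⟨h1, h2, h3⟩ := third_aux d L hd hL η z M u humem humono hprop aB bB k hkM'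
          hbB l hl hl1 habB haBmem (hD1k hkM') hpers
        exact Or.inr (Or.inr ⟨hkM, Or.inl (humem (k + 1) (by omega)), h1, h2, h3⟩)
  · -- `aB` lies on the East boundary
    have haBbd : aB ∈ eastBoundary d (cube d L) := haBmem.resolve_left haB
    have hpers : ∀ s, s < l → full d (maxBC d) (Phi d L s η) aB = false ∧
        full d (maxBC d) (Phi d L s (flipAt d η z)) aB = false :=
      fun s _ => ⟨full_not_mem haB, full_not_mem haB⟩
    by_cases hkM : k = M
    · subst hkM
      have hbv : bB = vstar d L := by rw [hbB, huM]
      refine Or.inl ⟨?_, aB, haBI, haBbd⟩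
      rw [← hbv]
      exact Finset.mem_Icc.2 ⟨habB, le_refl bB⟩
    · have hkM' : k < M := lt_of_le_of_ne hk hkM
      obtain ⟨h1, h2, h3⟩ := third_aux d L hd hL η z M u humem humono hprop aB bB k hkM'
        hbB l hl hl1 habB haBmem (hD1k hkM') hpers
      exact Or.inr (Or.inr ⟨hkM, Or.inl (humem (k + 1) (by omega)), h1, h2, h3⟩)

end East
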